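/- Let A₁,…,A_k ⊆ ℝ be compact sets with ∑ dim_B(A_j) < k − 1, where dim_B denotes upper box dimension. Then the set T = {(t₁,…,t_k) ∈ ℝ^k : (A₁ + t₁) ∩ (A₂ + t₂) ∩ ⋯ ∩ (A_k + t_k) ≠ ∅} has k-dimensional Lebesgue measure zero. -/

import Mathlib

open Filter Set

/-- Minimal number of `ε`-balls needed to cover `A` (covering number). -/
noncomputable def coverNum {α : Type*} [PseudoMetricSpace α] (A : Set α) (ε : ℝ) : ℕ :=
  sInf {n | ∃ s : Finset α, s.card = n ∧ A ⊆ ⋃ x ∈ s, Metric.ball x ε}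

/-- Upper box dimension (limit capacity) of a set in a metric space. -/
noncomputable def ubDim {α : Type*} [PseudoMetricSpace α] (A : Set α) : ℝ :=
  Filter.limsup (fun ε : ℝ => Real.log (coverNum A ε) / Real.log (1 / ε))
    (nhdsWithin 0 (Set.Ioi 0))

open MeasureTheory
open scoped ENNReal NNReal

lemma coverNum_le_card {α : Type*} [PseudoMetricSpace α] {A : Set α} {ε : ℝ} {s : Finset α}
    (h : A ⊆ ⋃ x ∈ s, Metric.ball x ε) : coverNum A ε ≤ s.card :=
  Nat.sInf_le ⟨s, rfl, h⟩

lemma coverNum_spec {α : Type*} [PseudoMetricSpace α] {A : Set α} (hA : IsCompact A) {ε : ℝ}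
    (hε : 0 < ε) : ∃ s : Finset α, s.card = coverNum A ε ∧ A ⊆ ⋃ x ∈ s, Metric.ball x ε := by
  have hcov : A ⊆ ⋃ x : α, Metric.ball x ε := fun a _ =>
    mem_iUnion.2 ⟨a, Metric.mem_ball_self hε⟩
  obtain ⟨t, ht⟩ := hA.elim_finite_subcover (fun x : α => Metric.ball x ε)
    (fun _ => Metric.isOpen_ball) hcov
  have hne : {n | ∃ s : Finset α, s.card = n ∧ A ⊆ ⋃ x ∈ s, Metric.ball x ε}.Nonempty :=
    ⟨t.card, t, rfl, ht⟩
  obtain ⟨s, hs, hc⟩ := Nat.sInf_mem hne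
  exact ⟨s, hs, hc⟩

lemma grid_cover (M : ℝ) {ε : ℝ} (hM : 0 ≤ M) (hε : 0 < ε) :
    ∃ s : Finset ℝ, (s.card : ℝ) ≤ 2 * M / ε + 2 ∧
      Set.Icc (-M) M ⊆ ⋃ x ∈ s, Metric.ball x ε := by
  refine ⟨(Finset.range (⌈2 * M / ε⌉₊ + 1)).image (fun i : ℕ => -M + ε * i), ?_, ?_⟩
  · calc ((Finset.image _ _).card : ℝ) ≤ ((⌈2 * M / ε⌉₊ + 1 : ℕ) : ℝ) := by
          exact_mod_cast Finset.card_image_le.trans (by simp)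
      _ ≤ 2 * M / ε + 1 + 1 := by
          push_cast
          have := (Nat.ceil_lt_add_one (by positivity : (0:ℝ) ≤ 2 * M / ε)).le
          linarith
      _ = 2 * M / ε + 2 := by ring
  · intro y hy
    obtain ⟨hy1, hy2⟩ := hy
    set u : ℝ := (y + M) / ε with hu
    have hu0 : 0 ≤ u := div_nonneg (by linarith) hε.le
    have hfl : (⌊u⌋₊ : ℝ) ≤ u := Nat.floor_le hu0
    have hfl2 : u < ⌊u⌋₊ + 1 := Nat.lt_floor_add_one u
    have hmem : ⌊u⌋₊ ∈ Finset.range (⌈2 * M / ε⌉₊ + 1) := by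
      rw [Finset.mem_range, Nat.lt_succ_iff]
      exact (Nat.floor_le_floor (by rw [hu]; apply div_le_div_of_nonneg_right ?_ ?_ <;> first | linarith | exact hε)).trans (Nat.floor_le_ceil _)
    refine mem_iUnion.2 ⟨-M + ε * ⌊u⌋₊, mem_iUnion.2 ⟨Finset.mem_image.2 ⟨⌊u⌋₊, hmem, rfl⟩, ?_⟩⟩
    rw [Metric.mem_ball, Real.dist_eq]
    have hy' : y = -M + ε * u := by rw [hu, mul_comm, div_mul_cancel₀ _ hε.ne']; ring
    rw [abs_lt]
    constructor <;> nlinarith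

lemma ubDim_bounded {A : Set ℝ} (hA : IsCompact A) :
    IsBoundedUnder (· ≤ ·) (nhdsWithin 0 (Set.Ioi 0))
      (fun ε : ℝ => Real.log (coverNum A ε) / Real.log (1 / ε)) := by
  obtain ⟨M, hM⟩ := hA.isBounded.subset_closedBall 0
  have hM0 : 0 ≤ M ⊔ 1 := le_trans zero_le_one le_sup_right
  set M' : ℝ := M ⊔ 1 with hM'
  have hA' : A ⊆ Set.Icc (-M') M' := by
    refine hM.trans ?_
    rw [Real.closedBall_eq_Icc]
    simp only [zero_sub, zero_add]
    exact Set.Icc_subset_Icc (neg_le_neg le_sup_left) le_sup_left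
  refine isBoundedUnder_of_eventually_le (a := 2) ?_
  have hmem : Set.Ioo (0:ℝ) (min 1 (1 / (2 * M' + 2))) ∈ nhdsWithin 0 (Set.Ioi 0) :=
    Ioo_mem_nhdsGT_of_mem ⟨le_refl 0, lt_min one_pos (by positivity)⟩
  filter_upwards [hmem] with ε hε
  obtain ⟨hε0, hε1⟩ := hε
  have hε1' : ε < 1 := lt_of_lt_of_le hε1 (min_le_left _ _)
  have hε2 : ε < 1 / (2 * M' + 2) := lt_of_lt_of_le hε1 (min_le_right _ _)
  obtain ⟨s, hcard, hcov⟩ := grid_cover M' hM0 hε0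
  have hN : (coverNum A ε : ℝ) ≤ 2 * M' / ε + 2 :=
    le_trans (by exact_mod_cast coverNum_le_card (hA'.trans hcov)) hcard
  have hNbound : (coverNum A ε : ℝ) ≤ (1 / ε) ^ 2 := by
    have h1 : 2 * M' / ε + 2 ≤ (2 * M' + 2) / ε := by
      rw [add_div]
      have : (2:ℝ) ≤ 2 / ε := (le_div_iff₀ hε0).2 (by nlinarith)
      linarith
    have key : ε * (2 * M' + 2) < 1 := (lt_div_iff₀ (by positivity)).1 hε2
    have h2 : (2 * M' + 2) / ε ≤ (1 / ε) ^ 2 := by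
      rw [div_pow, one_pow, div_le_div_iff₀ hε0 (by positivity)]
      nlinarith
    linarith
  have hlog : 0 < Real.log (1 / ε) := Real.log_pos (by rw [lt_div_iff₀ hε0]; linarith)
  rw [div_le_iff₀ hlog]
  rcases Nat.eq_zero_or_pos (coverNum A ε) with h0 | hpos
  · rw [h0]; simp; nlinarith [Real.log_nonpos hε0.le hε1'.le]
  · have : Real.log (coverNum A ε) ≤ Real.log ((1 / ε) ^ 2) :=
      Real.log_le_log (by exact_mod_cast hpos) hNbound
    rwa [Real.log_pow, Nat.cast_ofNat] at this

lemma coverNum_eventually_le {A : Set ℝ} (hA : IsCompact A) {d : ℝ} (hd : ubDim A < d) :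
    ∀ᶠ ε in nhdsWithin 0 (Set.Ioi 0), (coverNum A ε : ℝ) ≤ (1 / ε) ^ d := by
  have h := eventually_lt_of_limsup_lt hd (ubDim_bounded hA)
  have hmem : Set.Ioo (0:ℝ) 1 ∈ nhdsWithin 0 (Set.Ioi 0) :=
    Ioo_mem_nhdsGT_of_mem ⟨le_refl 0, one_pos⟩
  filter_upwards [h, hmem] with ε hlt hε
  obtain ⟨hε0, hε1⟩ := hε
  have hlog : 0 < Real.log (1 / ε) := Real.log_pos (by rw [lt_div_iff₀ hε0]; linarith)
  rcases Nat.eq_zero_or_pos (coverNum A ε) with h0 | hpos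
  · rw [h0]; exact_mod_cast (Real.rpow_pos_of_pos (by positivity) d).le
  · rw [div_lt_iff₀ hlog] at hlt
    have : (coverNum A ε : ℝ) = Real.exp (Real.log (coverNum A ε)) :=
      (Real.exp_log (by exact_mod_cast hpos)).symm
    rw [this, Real.rpow_def_of_pos (by positivity : (0:ℝ) < 1/ε)]
    exact Real.exp_le_exp.2 (by nlinarith)

/-- If `A₁, …, A_k ⊆ ℝ` are compact with `∑ dim_B(A_j) < k - 1`, then the set of translation
vectors `(t₁,…,t_k)` for which `(A₁+t₁) ∩ ⋯ ∩ (A_k+t_k) ≠ ∅` has `k`-dimensional Lebesgue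
measure zero. -/
theorem stmt_1 (k : ℕ) (hk : 2 ≤ k) (A : Fin k → Set ℝ) (hA : ∀ j, IsCompact (A j))
    (hdim : ∑ j, ubDim (A j) < (k : ℝ) - 1) :
    MeasureTheory.volume
      {t : Fin k → ℝ | (⋂ j, (fun a => a + t j) '' A j).Nonempty} = 0 := by
  classical
  have hk0 : (0:ℝ) < k := by exact_mod_cast Nat.lt_of_lt_of_le (by norm_num) hk
  set σ : ℝ := ∑ j, ubDim (A j) with hσ
  set δ : ℝ := ((k:ℝ) - 1 - σ) / (2 * k) with hδ
  have hδ0 : 0 < δ := div_pos (by linarith) (by linarith)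
  set d : Fin k → ℝ := fun j => ubDim (A j) + δ with hd
  have hsum : ∑ j, d j = σ + k * δ := by
    rw [hd, Finset.sum_add_distrib, hσ]
    simp [mul_comm]
  set e : ℝ := (k:ℝ) - 1 - ∑ j, d j with he
  have he0 : 0 < e := by
    rw [he, hsum, hδ]
    have : (k:ℝ) * (((k:ℝ) - 1 - σ) / (2 * k)) = ((k:ℝ) - 1 - σ) / 2 := by
      field_simp
    rw [this]; linarith
  set S : ℕ → Set (Fin k → ℝ) :=
    fun n => {t | ∃ x ∈ Set.Icc (-(n:ℝ)) (n:ℝ), ∀ j, x - t j ∈ A j} with hS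
  have hsub : {t : Fin k → ℝ | (⋂ j, (fun a => a + t j) '' A j).Nonempty} ⊆ ⋃ n, S n := by
    rintro t ⟨x, hx⟩
    simp only [Set.mem_iInter] at hx
    refine Set.mem_iUnion.2 ⟨⌈|x|⌉₊, x, ⟨?_, ?_⟩, fun j => ?_⟩
    · have h1 := Nat.le_ceil |x|
      have h2 := neg_abs_le x
      linarith
    · exact (le_abs_self x).trans (Nat.le_ceil _)
    · obtain ⟨a, ha, hax⟩ := hx j
      have : x - t j = a := by simp only at hax; linarith
      rwa [this]
  refine measure_mono_null hsub (measure_iUnion_null fun n => ?_)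
  set C : ℝ := (2*(n:ℝ)+2) * 4^k with hC
  have hev : ∀ᶠ ε in nhdsWithin (0:ℝ) (Set.Ioi 0),
      volume (S n) ≤ ENNReal.ofReal (C * ε ^ e) := by
    have hall : ∀ᶠ ε in nhdsWithin (0:ℝ) (Set.Ioi 0),
        ∀ j, (coverNum (A j) ε : ℝ) ≤ (1/ε) ^ (d j) :=
      eventually_all.2 fun j => coverNum_eventually_le (hA j) (by simp [hd]; linarith)
    filter_upwards [hall, Ioo_mem_nhdsGT_of_mem
      (Set.left_mem_Ico.2 one_pos)] with ε hN hε
    obtain ⟨hε0, hε1⟩ := hε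
    choose c hcard hcov using fun j => coverNum_spec (hA j) hε0
    obtain ⟨gs, hgscard, hgscov⟩ := grid_cover (n:ℝ) (Nat.cast_nonneg n) hε0
    have hincl : S n ⊆ ⋃ g ∈ gs, ⋃ p ∈ Fintype.piFinset c,
        Set.univ.pi (fun j => Metric.ball (g - p j) (2*ε)) := by
      rintro t ⟨x, hx, hxt⟩
      obtain ⟨g, hg, hgx⟩ : ∃ g ∈ gs, x ∈ Metric.ball g ε := by
        have := hgscov hx
        simpa using this
      have hp : ∀ j, ∃ p ∈ c j, x - t j ∈ Metric.ball p ε := by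
        intro j
        have := hcov j (hxt j)
        simpa using this
      choose p hpmem hpball using hp
      refine Set.mem_iUnion₂.2 ⟨g, hg, Set.mem_iUnion₂.2
        ⟨p, Fintype.mem_piFinset.2 hpmem, fun j _ => ?_⟩⟩
      rw [Metric.mem_ball, Real.dist_eq] at hgx ⊢
      have h2 : |x - t j - p j| < ε := by
        have := hpball j
        rwa [Metric.mem_ball, Real.dist_eq] at this
      have heq : t j - (g - p j) = (x - g) - (x - t j - p j) := by ring
      rw [heq]
      calc |(x - g) - (x - t j - p j)| ≤ |x - g| + |x - t j - p j| := abs_sub _ _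
        _ < 2 * ε := by linarith
    have hbox : ∀ (g : ℝ) (p : Fin k → ℝ),
        volume (Set.univ.pi fun j => Metric.ball (g - p j) (2*ε))
          = ENNReal.ofReal (4*ε) ^ k := by
      intro g p
      rw [volume_pi_pi]
      simp only [Real.volume_ball]
      rw [Finset.prod_const, Finset.card_univ, Fintype.card_fin]
      congr 2
      ring
    calc volume (S n)
        ≤ ∑ g ∈ gs, ∑ p ∈ Fintype.piFinset c, ENNReal.ofReal (4*ε) ^ k := by
          refine (measure_mono hincl).trans ((measure_biUnion_finset_le _ _).trans ?_)
          refine Finset.sum_le_sum fun g _ => (measure_biUnion_finset_le _ _).trans ?_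
          exact Finset.sum_le_sum fun p _ => le_of_eq (hbox g p)
      _ = (gs.card : ℝ≥0∞) * ((Fintype.piFinset c).card * ENNReal.ofReal (4*ε) ^ k) := by
          simp [Finset.sum_const, mul_assoc]
      _ ≤ ENNReal.ofReal (C * ε ^ e) := by
          have hNj : ∀ j, (0:ℝ) ≤ (coverNum (A j) ε : ℝ) := fun j => Nat.cast_nonneg _
          have hreal : (gs.card : ℝ) * (((Fintype.piFinset c).card : ℝ) * (4*ε) ^ k)
              ≤ C * ε ^ e := by
            have hcardprod : ((Fintype.piFinset c).card : ℝ)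
                = ∏ j, (coverNum (A j) ε : ℝ) := by
              rw [Fintype.card_piFinset]
              push_cast
              exact Finset.prod_congr rfl fun j _ => by rw [hcard j]
            have hprodle : ((Fintype.piFinset c).card : ℝ) ≤ (ε ^ (∑ j, d j))⁻¹ := by
              rw [hcardprod, ← Real.inv_rpow hε0.le, ← one_div,
                Real.rpow_sum_of_pos (by positivity)]
              exact Finset.prod_le_prod (fun j _ => hNj j) (fun j _ => hN j)
            have hgle : (gs.card : ℝ) ≤ (2*(n:ℝ)+2) * ε⁻¹ := by
              refine hgscard.trans ?_
              have h1 : (1:ℝ) ≤ ε⁻¹ := by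
                have h2 := inv_anti₀ hε0 hε1.le
                simpa using h2
              rw [div_eq_mul_inv, add_mul]
              have hn0 : (0:ℝ) ≤ 2*(n:ℝ) := by positivity
              nlinarith
            have hrpow : ε ^ e = ε ^ k * (ε⁻¹ * (ε ^ (∑ j, d j))⁻¹) := by
              rw [← Real.rpow_natCast ε k, ← Real.rpow_neg_one ε,
                ← Real.rpow_neg hε0.le, ← Real.rpow_add hε0, ← Real.rpow_add hε0]
              congr 1
              rw [he]
              ring
            have h4 : (4*ε:ℝ) ^ k = 4 ^ k * ε ^ k := mul_pow 4 ε k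
            rw [h4, hrpow, hC]
            have hb1 : (0:ℝ) ≤ (Fintype.piFinset c).card := Nat.cast_nonneg _
            calc (gs.card : ℝ) * (((Fintype.piFinset c).card : ℝ) * (4 ^ k * ε ^ k))
                ≤ ((2*(n:ℝ)+2) * ε⁻¹) * ((ε ^ (∑ j, d j))⁻¹ * (4 ^ k * ε ^ k)) := by
                  apply mul_le_mul hgle (mul_le_mul hprodle (le_refl _) (by positivity) (by positivity)) (by positivity) (by positivity)
              _ = (2*(n:ℝ)+2) * 4 ^ k * (ε ^ k * (ε⁻¹ * (ε ^ (∑ j, d j))⁻¹)) := by ring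
          calc (gs.card : ℝ≥0∞) * ((Fintype.piFinset c).card * ENNReal.ofReal (4*ε) ^ k)
              = ENNReal.ofReal ((gs.card : ℝ) * (((Fintype.piFinset c).card : ℝ) * (4*ε) ^ k)) := by
                rw [ENNReal.ofReal_mul (Nat.cast_nonneg _), ENNReal.ofReal_mul (Nat.cast_nonneg _),
                  ENNReal.ofReal_pow (by positivity), ENNReal.ofReal_natCast, ENNReal.ofReal_natCast]
            _ ≤ ENNReal.ofReal (C * ε ^ e) := ENNReal.ofReal_le_ofReal hreal
  have htend : Tendsto (fun ε : ℝ => ENNReal.ofReal (C * ε ^ e))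
      (nhdsWithin (0:ℝ) (Set.Ioi 0)) (nhds 0) := by
    have h1 : Tendsto (fun ε : ℝ => ε ^ e) (nhdsWithin (0:ℝ) (Set.Ioi 0)) (nhds 0) := by
      have h := (Real.continuousAt_rpow_const 0 e (Or.inr he0.le)).tendsto
      rw [Real.zero_rpow he0.ne'] at h
      exact h.mono_left nhdsWithin_le_nhds
    have h2 := h1.const_mul C
    rw [mul_zero] at h2
    have h3 := (ENNReal.continuous_ofReal.tendsto 0).comp h2
    simpa [Function.comp_def] using h3
  have := ge_of_tendsto htend hev
  exact le_antisymm this zero_le
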